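/- Let (Ω, ℱ, ℙ) be a probability space and let 𝒢 and 𝒯 be independent sub-σ-algebras of ℱ. Let 𝒢₀ ⊆ 𝒢 and 𝒯₀ ⊆ 𝒯 be sub-σ-algebras, let Y be a 𝒢-measurable integrable random variable, and let Z be a 𝒯-measurable bounded random variable. Then E[YZ | 𝒢₀ ∨ 𝒯₀] = E[Y | 𝒢₀] · E[Z | 𝒯₀] almost surely. -/

import Mathlib

open MeasureTheory ProbabilityTheory

lemma setIntegral_inter_indep_aux
    {Ω : Type*} [F : MeasurableSpace Ω] (P : Measure Ω) [IsProbabilityMeasure P]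
    (G T : MeasurableSpace Ω) (hG : G ≤ F) (hT : T ≤ F)
    (hindep : Indep G T P) {W : Ω → ℝ}
    (hW : StronglyMeasurable[G] W) (hWint : Integrable W P)
    {A B : Set Ω} (hA : MeasurableSet[G] A) (hB : MeasurableSet[T] B) :
    ∫ x in A ∩ B, W x ∂P = (∫ x in A, W x ∂P) * (P B).toReal := by
  letI : MeasurableSpace Ω := F
  have hAF : MeasurableSet[F] A := hG _ hA
  have hBF : MeasurableSet[F] B := hT _ hB
  set f : Ω → ℝ := A.indicator W with hf
  set g : Ω → ℝ := B.indicator (fun _ => (1 : ℝ)) with hg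
  have hfmeas : Measurable[G] f := hW.measurable.indicator hA
  have hgmeas : Measurable[T] g :=
    Measurable.indicator (m := T) measurable_const hB
  have hfg : IndepFun f g P := by
    rw [IndepFun_iff_Indep]
    exact indep_of_indep_of_le_right
      (indep_of_indep_of_le_left hindep hfmeas.comap_le) hgmeas.comap_le
  have hfint : Integrable f P := hWint.indicator hAF
  have hgint : Integrable g P := (integrable_const (1 : ℝ)).indicator hBF
  have hmul : (fun x => f x * g x) = (A ∩ B).indicator W := by
    funext x
    by_cases hxA : x ∈ A <;> by_cases hxB : x ∈ B <;>
      simp [hf, hg, Set.indicator_apply, hxA, hxB]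
  have h1 : ∫ x, f x * g x ∂P = (∫ x, f x ∂P) * ∫ x, g x ∂P :=
    hfg.integral_mul_eq_mul_integral hfint.1 hgint.1
  rw [hmul] at h1
  rw [← integral_indicator (hAF.inter hBF), h1,
    hf, integral_indicator hAF, hg, integral_indicator hBF]
  simp [mul_comm, Measure.real]

lemma condexp_sup_indep_aux
    {Ω : Type*} [F : MeasurableSpace Ω] (P : Measure Ω) [IsProbabilityMeasure P]
    (G T G₀ T₀ : MeasurableSpace Ω) (hG : G ≤ F) (hT : T ≤ F)
    (hindep : Indep G T P) (hG₀ : G₀ ≤ G) (hT₀ : T₀ ≤ T)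
    {X : Ω → ℝ} (hX : StronglyMeasurable[G] X) (hXint : Integrable X P) :
    P[X | G₀ ⊔ T₀] =ᵐ[P] P[X | G₀] := by
  letI : MeasurableSpace Ω := F
  have hG₀F : G₀ ≤ F := hG₀.trans hG
  have hT₀F : T₀ ≤ F := hT₀.trans hT
  have hm : G₀ ⊔ T₀ ≤ F := sup_le hG₀F hT₀F
  set S : Set (Set Ω) :=
    {s | ∃ A, MeasurableSet[G₀] A ∧ ∃ B, MeasurableSet[T₀] B ∧ s = A ∩ B} with hS
  have h_eq : (G₀ ⊔ T₀) = MeasurableSpace.generateFrom S := by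
    refine le_antisymm (sup_le ?_ ?_) (MeasurableSpace.generateFrom_le ?_)
    · intro A hA
      exact MeasurableSpace.measurableSet_generateFrom
        ⟨A, hA, Set.univ, MeasurableSet.univ, (Set.inter_univ A).symm⟩
    · intro B hB
      exact MeasurableSpace.measurableSet_generateFrom
        ⟨Set.univ, MeasurableSet.univ, B, hB, (Set.univ_inter B).symm⟩
    · rintro s ⟨A, hA, B, hB, rfl⟩
      exact ((le_sup_left : G₀ ≤ G₀ ⊔ T₀) _ hA).inter ((le_sup_right : T₀ ≤ G₀ ⊔ T₀) _ hB)
  have h_pi : IsPiSystem S := by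
    rintro s ⟨A, hA, B, hB, rfl⟩ t ⟨A', hA', B', hB', rfl⟩ -
    exact ⟨A ∩ A', hA.inter hA', B ∩ B', hB.inter hB', by rw [Set.inter_inter_inter_comm]⟩
  have key : ∀ s, MeasurableSet[G₀ ⊔ T₀] s →
      ∫ x in s, (P[X | G₀]) x ∂P = ∫ x in s, X x ∂P := by
    intro s hs
    refine @MeasurableSpace.induction_on_inter Ω (G₀ ⊔ T₀)
      (fun s _ => ∫ x in s, (P[X | G₀]) x ∂P = ∫ x in s, X x ∂P) S
      h_eq h_pi ?_ ?_ ?_ ?_ s hs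
    · simp
    · rintro t ⟨A, hA, B, hB, rfl⟩
      rw [setIntegral_inter_indep_aux P G T hG hT hindep
          (stronglyMeasurable_condExp.mono hG₀) integrable_condExp (hG₀ _ hA) (hT₀ _ hB),
        setIntegral_inter_indep_aux P G T hG hT hindep hX hXint (hG₀ _ hA) (hT₀ _ hB),
        setIntegral_condExp hG₀F hXint hA]
    · intro t ht hct
      have htF : MeasurableSet[F] t := hm _ ht
      have h1 := integral_add_compl htF (integrable_condExp (m := G₀) (f := X) (μ := P))
      have h2 := integral_add_compl htF hXint
      have h3 : ∫ x, (P[X | G₀]) x ∂P = ∫ x, X x ∂P := integral_condExp hG₀F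
      linarith
    · intro f hdisj hmeas hC
      have hmF : ∀ i, MeasurableSet[F] (f i) := fun i => hm _ (hmeas i)
      rw [integral_iUnion hmF hdisj integrable_condExp.integrableOn,
        integral_iUnion hmF hdisj hXint.integrableOn]
      exact tsum_congr hC
  refine (ae_eq_condExp_of_forall_setIntegral_eq hm hXint
    (fun s _ _ => integrable_condExp.integrableOn) (fun s hs _ => key s hs)
    ⟨_, stronglyMeasurable_condExp.mono le_sup_left, Filter.EventuallyEq.rfl⟩).symm

/-- Factorization behind equations (42) and (44) of the paper: if `𝒢` and `𝒯` are
independent sub-σ-algebras, `𝒢₀ ⊆ 𝒢`, `𝒯₀ ⊆ 𝒯`, `Y` is `𝒢`-measurable and integrable,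
and `Z` is `𝒯`-measurable and bounded, then
`E[YZ | 𝒢₀ ⊔ 𝒯₀] = E[Y | 𝒢₀] ⋅ E[Z | 𝒯₀]` almost surely. -/
theorem condexp_mul_indep_factorization
    {Ω : Type*} [F : MeasurableSpace Ω] (P : Measure Ω) [IsProbabilityMeasure P]
    (G T G₀ T₀ : MeasurableSpace Ω) (hG : G ≤ F) (hT : T ≤ F)
    (hindep : Indep G T P) (hG₀ : G₀ ≤ G) (hT₀ : T₀ ≤ T)
    (Y Z : Ω → ℝ)
    (hYmeas : StronglyMeasurable[G] Y) (hYint : Integrable Y P)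
    (hZmeas : StronglyMeasurable[T] Z) (hZbdd : ∃ M : ℝ, ∀ ω, |Z ω| ≤ M) :
    P[fun ω => Y ω * Z ω | G₀ ⊔ T₀] =ᵐ[P] fun ω => (P[Y | G₀]) ω * (P[Z | T₀]) ω := by
  letI : MeasurableSpace Ω := F
  obtain ⟨M, hM⟩ := hZbdd
  have hG₀F : G₀ ≤ F := hG₀.trans hG
  have hT₀F : T₀ ≤ F := hT₀.trans hT
  have hm : G₀ ⊔ T₀ ≤ F := sup_le hG₀F hT₀F
  have hGT₀ : G ⊔ T₀ ≤ F := sup_le hG hT₀F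
  have hsub : G₀ ⊔ T₀ ≤ G ⊔ T₀ := sup_le_sup_right hG₀ T₀
  have hZmeasF : StronglyMeasurable[F] Z := hZmeas.mono hT
  have hZF : AEStronglyMeasurable Z P := hZmeasF.aestronglyMeasurable
  have hZint : Integrable Z P :=
    (integrable_const M).mono' hZF (Filter.Eventually.of_forall fun ω => by
      simpa [Real.norm_eq_abs] using hM ω)
  have hYZint : Integrable (fun ω => Y ω * Z ω) P := by
    have := hYint.bdd_mul (c := M) hZF
      (Filter.Eventually.of_forall fun ω => by simpa [Real.norm_eq_abs] using hM ω)
    simpa [mul_comm] using this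
  set W := P[Z | T₀] with hWdef
  -- Step 1: E[YZ | G ⊔ T₀] = Y * W
  have step1 : P[fun ω => Y ω * Z ω | G ⊔ T₀] =ᵐ[P] fun ω => Y ω * W ω := by
    have hmul : P[fun ω => Y ω * Z ω | G ⊔ T₀]
        =ᵐ[P] Y * P[Z | G ⊔ T₀] := by
      have := condExp_mul_of_stronglyMeasurable_left (m := G ⊔ T₀) (μ := P)
        (hYmeas.mono le_sup_left) (g := Z) (by exact hYZint) hZint
      exact this
    have hz : P[Z | G ⊔ T₀] =ᵐ[P] W := by
      have := condexp_sup_indep_aux P T G T₀ G hT hG hindep.symm hT₀ le_rfl hZmeas hZint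
      rwa [sup_comm] at this
    filter_upwards [hmul, hz] with ω h1 h2
    rw [h1, Pi.mul_apply, h2]
  -- Step 2: tower property
  have tower : P[fun ω => Y ω * Z ω | G₀ ⊔ T₀]
      =ᵐ[P] P[P[fun ω => Y ω * Z ω | G ⊔ T₀] | G₀ ⊔ T₀] :=
    (condExp_condExp_of_le hsub hGT₀).symm
  -- W is a.e. bounded
  have hWbdd : ∀ᵐ ω ∂P, |W ω| ≤ ((max M 0).toNNReal : ℝ) := by
    refine ae_bdd_condExp_of_ae_bdd (Filter.Eventually.of_forall fun ω => ?_)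
    rw [Real.coe_toNNReal _ (le_max_right M 0)]
    exact (hM ω).trans (le_max_left M 0)
  have hWmeasF : StronglyMeasurable[F] W := stronglyMeasurable_condExp.mono hT₀F
  have hWYint : Integrable (fun ω => W ω * Y ω) P :=
    hYint.bdd_mul (c := ((max M 0).toNNReal : ℝ)) hWmeasF.aestronglyMeasurable
      (hWbdd.mono fun ω h => by rw [Real.norm_eq_abs]; exact h)
  -- Step 3
  have step3 : P[fun ω => Y ω * W ω | G₀ ⊔ T₀]
      =ᵐ[P] fun ω => W ω * (P[Y | G₀ ⊔ T₀]) ω := by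
    have hmul : P[W * Y | G₀ ⊔ T₀] =ᵐ[P] W * P[Y | G₀ ⊔ T₀] :=
      condExp_mul_of_stronglyMeasurable_left (m := G₀ ⊔ T₀) (μ := P)
        (stronglyMeasurable_condExp.mono le_sup_right) (by exact hWYint) hYint
    have heq : (fun ω => Y ω * W ω) = W * Y := by funext ω; simp [mul_comm]
    rw [heq]
    filter_upwards [hmul] with ω h
    rw [h, Pi.mul_apply]
  have step4 : P[Y | G₀ ⊔ T₀] =ᵐ[P] P[Y | G₀] :=
    condexp_sup_indep_aux P G T G₀ T₀ hG hT hindep hG₀ hT₀ hYmeas hYint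
  calc P[fun ω => Y ω * Z ω | G₀ ⊔ T₀]
      =ᵐ[P] P[P[fun ω => Y ω * Z ω | G ⊔ T₀] | G₀ ⊔ T₀] := tower
    _ =ᵐ[P] P[fun ω => Y ω * W ω | G₀ ⊔ T₀] := condExp_congr_ae step1
    _ =ᵐ[P] fun ω => W ω * (P[Y | G₀ ⊔ T₀]) ω := step3
    _ =ᵐ[P] fun ω => (P[Y | G₀]) ω * W ω := by
        filter_upwards [step4] with ω h
        rw [h, mul_comm]
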